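/- Every conditional antimatroid C is dismantlable: there exists an ordering c_1,…,c_m of all concepts of C such that each c_i is a corner of the level set C_i = {c_1,…,c_i}. In particular, any ordering of C that is nondecreasing with respect to cardinality of concepts is a corner peeling. -/

import Mathlib

variable {X : Type} [Fintype X] [DecidableEq X]

/-- Hamming distance between two subsets of `X` (size of symmetric difference). -/
def hdist (c c' : Finset X) : ℕ := ((c \ c') ∪ (c' \ c)).card

/-- The restriction `C|Y = {c ∩ Y : c ∈ C}`. -/
def restrictTo (C : Finset (Finset X)) (Y : Finset X) : Finset (Finset X) :=
  C.image (· ∩ Y)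

/-- `Y` is shattered by `C`, i.e. `C|Y = 2^Y`. -/
def Shatters (C : Finset (Finset X)) (Y : Finset X) : Prop :=
  ∀ s ∈ Y.powerset, ∃ c ∈ C, c ∩ Y = s

instance (C : Finset (Finset X)) : DecidablePred (Shatters C) := fun _ => by
  unfold Shatters; infer_instance

/-- The family `X̄(C)` of all sets shattered by `C`. -/
def shatteredSets (C : Finset (Finset X)) : Finset (Finset X) :=
  Finset.univ.filter (Shatters C)

/-- The VC dimension of `C`: maximum size of a shattered set. -/
def vcDim (C : Finset (Finset X)) : ℕ := (shatteredSets C).sup Finset.card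

/-- `C` is ample: `|C| = |X̄(C)|`. -/
def IsAmple (C : Finset (Finset X)) : Prop := C.card = (shatteredSets C).card

/-- `C` is a maximum class of VC dimension `d`. -/
def IsMaximumClass (C : Finset (Finset X)) (d : ℕ) : Prop :=
  vcDim C = d ∧ C.card = ∑ i ∈ Finset.range (d + 1), (Fintype.card X).choose i

/-- `B` is a cube with support `Y`: `B = {t ∪ s : s ⊆ Y}` for some `t ⊆ X \ Y`. -/
def IsCubeS (B : Finset (Finset X)) (Y : Finset X) : Prop :=
  ∃ t : Finset X, t ∩ Y = ∅ ∧ B = Y.powerset.image (fun s => t ∪ s)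

/-- `B` is a cube. -/
def IsCube (B : Finset (Finset X)) : Prop := ∃ Y, IsCubeS B Y

/-- `B` is a cube of `C`: a cube contained in `C`. -/
def IsCubeOf (C B : Finset (Finset X)) : Prop := B ⊆ C ∧ IsCube B

/-- `B` is a maximal cube of `C` (maximal under inclusion among cubes of `C`). -/
def IsMaximalCubeOf (C B : Finset (Finset X)) : Prop :=
  IsCubeOf C B ∧ ∀ B', IsCubeOf C B' → B ⊆ B' → B = B'

/-- `c` is a corner of `C`: a concept of `C` belonging to a unique maximal cube of `C`. -/
def IsCornerOf (C : Finset (Finset X)) (c : Finset X) : Prop :=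
  c ∈ C ∧ ∃! B, IsMaximalCubeOf C B ∧ c ∈ B

/-- The one-inclusion graph `G(C)`. -/
def oneInclusionGraph (C : Finset (Finset X)) : SimpleGraph {c : Finset X // c ∈ C} where
  Adj c c' := hdist c.1 c'.1 = 1
  symm := by
    refine ⟨fun a b h => ?_⟩
    simpa [hdist, Finset.union_comm] using h
  loopless := by
    refine ⟨fun a h => ?_⟩
    simp [hdist] at h

/-- `C` is isometric: `G(C)` is connected and graph distances equal Hamming distances. -/
def IsIsometric (C : Finset (Finset X)) : Prop :=
  (oneInclusionGraph C).Connected ∧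
  ∀ c c' : {c : Finset X // c ∈ C}, (oneInclusionGraph C).dist c c' = hdist c.1 c'.1

/-- `C` is weakly isometric: `G(C)` is connected and graph distances equal Hamming
distances for pairs at Hamming distance at most 2. -/
def IsWeaklyIsometric (C : Finset (Finset X)) : Prop :=
  (oneInclusionGraph C).Connected ∧
  ∀ c c' : {c : Finset X // c ∈ C}, hdist c.1 c'.1 ≤ 2 →
    (oneInclusionGraph C).dist c c' = hdist c.1 c'.1

/-- A list of concepts is a corner peeling if it has no duplicates and each element is a
corner of the corresponding level set. -/
def IsCornerPeeling (l : List (Finset X)) : Prop :=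
  l.Nodup ∧ ∀ i (h : i < l.length), IsCornerOf ((l.take (i + 1)).toFinset) (l.get ⟨i, h⟩)

/-- `C` is dismantlable: it admits a corner peeling ordering of all its concepts. -/
def Dismantlable (C : Finset (Finset X)) : Prop :=
  ∃ l : List (Finset X), l.toFinset = C ∧ IsCornerPeeling l

/-- Non-clashing condition for a map `r`. -/
def NonClashing (C : Finset (Finset X)) (r : Finset X → Finset X) : Prop :=
  ∀ c ∈ C, ∀ c' ∈ C, c ≠ c' → c ∩ (r c ∪ r c') ≠ c' ∩ (r c ∪ r c')

/-- `r` is a representation map for `C`: a non-clashing bijection from `C` onto `X̄(C)`. -/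
def IsRepMap (C : Finset (Finset X)) (r : Finset X → Finset X) : Prop :=
  (∀ c ∈ C, r c ∈ shatteredSets C) ∧
  Set.InjOn r ↑C ∧
  (∀ Y ∈ shatteredSets C, ∃ c ∈ C, r c = Y) ∧
  NonClashing C r

/-- `C` admits an unlabeled sample compression scheme of size `k`. -/
def HasUSCS (C : Finset (Finset X)) (k : ℕ) : Prop :=
  ∃ (α : Finset X → Finset X → Finset X) (β : Finset X → Finset X),
    ∀ (Y : Finset X), ∀ c ∈ C,
      α Y (c ∩ Y) ⊆ Y ∧ (α Y (c ∩ Y)).card ≤ k ∧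
      β (α Y (c ∩ Y)) ∈ C ∧ β (α Y (c ∩ Y)) ∩ Y = c ∩ Y

/-- The cube of `2^X` with support `Y` containing `c`. -/
def cubeAt (c Y : Finset X) : Finset (Finset X) :=
  Y.powerset.image (fun s => (c \ Y) ∪ s)

/-- Condition (C1): for every `c ∈ C`, the cube with support `r c` containing `c`
is a cube of `C`. -/
def CondC1 (C : Finset (Finset X)) (r : Finset X → Finset X) : Prop :=
  ∀ c ∈ C, cubeAt c (r c) ⊆ C

/-- Condition (C2): every cube of `C` has a unique concept `c` with `r c ∩ supp B = ∅`. -/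
def CondC2 (C : Finset (Finset X)) (r : Finset X → Finset X) : Prop :=
  ∀ B Y, B ⊆ C → IsCubeS B Y → ∃! c, c ∈ B ∧ r c ∩ Y = ∅

/-- The facet of the cross-polytope corresponding to a subset `c ⊆ X`:
`+x ∈ σ_c` iff `x ∈ c` (where `+x = Sum.inl x` and `-x = Sum.inr x`). -/
def facet (c : Finset X) : Finset (X ⊕ X) :=
  c.image Sum.inl ∪ (Finset.univ \ c).image Sum.inr

/-- A list of facets of the cross-polytope is a partial shelling. -/
def IsPartialShelling (L : List (Finset (X ⊕ X))) : Prop :=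
  L.Nodup ∧ ∀ i j, i < j → j < L.length →
    ∃ k < j, ((L.getD k ∅) ∩ (L.getD j ∅)).card = Fintype.card X - 1 ∧
      (L.getD i ∅) ∩ (L.getD j ∅) ⊆ (L.getD k ∅) ∩ (L.getD j ∅)

/-- `Q` is an incomplete cube for `(C, D)` with support `σ`: a cube of `C` whose
support `σ` is a missed simplex (shattered by `C` but not by `D`). -/
def IsIncompleteCube (C D Q : Finset (Finset X)) (σ : Finset X) : Prop :=
  Q ⊆ C ∧ IsCubeS Q σ ∧ Shatters C σ ∧ ¬ Shatters D σ

/-- `c` is the source of the incomplete cube `Q` with support `σ`: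
`c ∈ Q` and `c ∩ σ ∉ D|σ`. -/
def IsSource (D Q : Finset (Finset X)) (σ : Finset X) (c : Finset X) : Prop :=
  c ∈ Q ∧ c ∩ σ ∉ restrictTo D σ

/-- The restriction `C_x = C|(X \ {x})`, with concepts viewed as subsets of `X`
avoiding `x`. -/
def restrictX (C : Finset (Finset X)) (x : X) : Finset (Finset X) :=
  C.image (·.erase x)

/-- The reduction `C^x = {c ⊆ X \ {x} : c ∈ C and c ∪ {x} ∈ C}`. -/
def reduction (C : Finset (Finset X)) (x : X) : Finset (Finset X) :=
  C.filter (fun c => x ∉ c ∧ insert x c ∈ C)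

/-- The interval `B(c,c') = {t : d(c,t) + d(t,c') = d(c,c')}`. -/
def interval (c c' : Finset X) : Finset (Finset X) :=
  Finset.univ.filter (fun t => hdist c t + hdist t c' = hdist c c')

/-- `C'` is convex in `C`. -/
def IsConvexIn (C C' : Finset (Finset X)) : Prop :=
  ∀ c ∈ C', ∀ c'' ∈ C', interval c c'' ∩ C ⊆ C'

/-- `C'` is locally convex in `C`. -/
def IsLocallyConvexIn (C C' : Finset (Finset X)) : Prop :=
  ∀ c ∈ C', ∀ c'' ∈ C', hdist c c'' = 2 → interval c c'' ∩ C ⊆ C'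

/-- `C` is a conditional antimatroid: contains `∅`, closed under intersection, and
every concept is generated by its extremal points. -/
def IsCondAntimatroid (C : Finset (Finset X)) : Prop :=
  ∅ ∈ C ∧ (∀ c ∈ C, ∀ c' ∈ C, c ∩ c' ∈ C) ∧
  ∀ c ∈ C, ∀ c' ∈ C, (c.filter (fun x => c.erase x ∈ C)) ⊆ c' → c ⊆ c'

set_option linter.unusedSectionVars false

open Finset in
lemma aux_sdiff_union_eq {c Y s : Finset X} (hY : Y ⊆ c) (hs : s ⊆ Y) :
    (c \ Y) ∪ s = c \ (Y \ s) := by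
  ext x
  simp only [mem_union, mem_sdiff]
  constructor
  · rintro (⟨h1, h2⟩ | h)
    · exact ⟨h1, fun h' => h2 h'.1⟩
    · exact ⟨hY (hs h), fun h' => h'.2 h⟩
  · rintro ⟨hc, h⟩
    by_cases hxY : x ∈ Y
    · right; by_contra hxs; exact h ⟨hxY, hxs⟩
    · left; exact ⟨hc, hxY⟩

open Finset in
lemma aux_mem_cubeAt {c Y a : Finset X} (hY : Y ⊆ c) :
    a ∈ cubeAt c Y ↔ ∃ u ⊆ Y, a = c \ u := by
  simp only [cubeAt, mem_image, mem_powerset]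
  constructor
  · rintro ⟨s, hs, rfl⟩
    exact ⟨Y \ s, sdiff_subset, aux_sdiff_union_eq hY hs⟩
  · rintro ⟨u, hu, rfl⟩
    refine ⟨Y \ u, sdiff_subset, ?_⟩
    rw [aux_sdiff_union_eq hY sdiff_subset, sdiff_sdiff_self_left,
      inter_eq_right.mpr hu]

open Finset in
lemma aux_self_mem_cubeAt {c Y : Finset X} (hY : Y ⊆ c) : c ∈ cubeAt c Y := by
  rw [aux_mem_cubeAt hY]; exact ⟨∅, empty_subset _, by simp⟩

open Finset in
lemma aux_cubeAt_mono {c Y Z : Finset X} (hZ : Z ⊆ c) (hYZ : Y ⊆ Z) :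
    cubeAt c Y ⊆ cubeAt c Z := by
  intro a ha
  rw [aux_mem_cubeAt (hYZ.trans hZ)] at ha
  rw [aux_mem_cubeAt hZ]
  obtain ⟨u, hu, rfl⟩ := ha
  exact ⟨u, hu.trans hYZ, rfl⟩

open Finset in
lemma aux_cubeAt_isCubeS {c Y : Finset X} (hY : Y ⊆ c) : IsCubeS (cubeAt c Y) Y := by
  refine ⟨c \ Y, ?_, rfl⟩
  ext x; simp only [mem_inter, mem_sdiff, notMem_empty, iff_false]
  rintro ⟨⟨_, h⟩, h'⟩; exact h h'

open Finset in
lemma corner_of_max {C C' : Finset (Finset X)} (hsub : C' ⊆ C)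
    (hint : ∀ a ∈ C, ∀ b ∈ C, a ∩ b ∈ C)
    {c : Finset X} (hc : c ∈ C')
    (hmax : ∀ d ∈ C', d.card ≤ c.card)
    (hdown : ∀ d ∈ C, d.card < c.card → d ∈ C') :
    IsCornerOf C' c := by
  set Y : Finset X := c.filter (fun x => c.erase x ∈ C') with hYdef
  have hYc : Y ⊆ c := filter_subset _ _
  -- c \ u ∈ C' for u ⊆ Y
  have hsdiff : ∀ u, u ⊆ Y → c \ u ∈ C' := by
    intro u
    induction u using Finset.induction_on with
    | empty => intro _; simpa using hc
    | @insert x u hx ih =>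
      intro hu
      have hxY : x ∈ Y := hu (mem_insert_self _ _)
      rw [hYdef, mem_filter] at hxY
      obtain ⟨hxc, hex⟩ := hxY
      have h1 : c \ u ∈ C' := ih ((subset_insert x u).trans hu)
      have heq : c \ insert x u = (c \ u) ∩ (c.erase x) := by
        ext y
        simp only [mem_sdiff, mem_insert, mem_inter, mem_erase]
        tauto
      have h2 : c \ insert x u ∈ C := heq ▸ hint _ (hsub h1) _ (hsub hex)
      apply hdown _ h2
      apply card_lt_card
      refine ⟨sdiff_subset, fun hcon => ?_⟩
      have := hcon hxc
      simp at this
  -- cubeAt c Z ⊆ C' for Z ⊆ Y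
  have hcube_sub : ∀ Z, Z ⊆ Y → cubeAt c Z ⊆ C' := by
    intro Z hZ a ha
    rw [aux_mem_cubeAt (hZ.trans hYc)] at ha
    obtain ⟨u, hu, rfl⟩ := ha
    exact hsdiff u (hu.trans hZ)
  -- every cube of C' containing c is cubeAt c Z for some Z ⊆ Y
  have hchar : ∀ B, IsCubeOf C' B → c ∈ B → ∃ Z, Z ⊆ Y ∧ B = cubeAt c Z := by
    rintro B ⟨hBsub, Z, t, htZ, rfl⟩ hcB
    simp only [mem_image, mem_powerset] at hcB
    obtain ⟨s0, hs0, hc0⟩ := hcB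
    have htop : t ∪ Z ∈ Z.powerset.image (fun s => t ∪ s) :=
      mem_image_of_mem _ (mem_powerset.mpr (Subset.refl Z))
    have htopC : t ∪ Z ∈ C' := hBsub htop
    have hceq : c = t ∪ Z := by
      refine eq_of_subset_of_card_le ?_ (hmax _ htopC)
      rw [← hc0]; exact union_subset_union_right hs0
    have hZc : Z ⊆ c := hceq ▸ subset_union_right
    have htc : t = c \ Z := by
      rw [hceq]
      ext x
      simp only [mem_sdiff, mem_union]
      constructor
      · intro hx
        refine ⟨Or.inl hx, fun hxZ => ?_⟩
        have : x ∈ t ∩ Z := mem_inter.mpr ⟨hx, hxZ⟩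
        rw [htZ] at this; exact notMem_empty x this
      · rintro ⟨hx | hx, hnx⟩
        · exact hx
        · exact absurd hx hnx
    refine ⟨Z, ?_, by rw [cubeAt, ← htc]⟩
    intro x hxZ
    rw [hYdef, mem_filter]
    refine ⟨hZc hxZ, ?_⟩
    have hmem : t ∪ Z.erase x ∈ Z.powerset.image (fun s => t ∪ s) :=
      mem_image_of_mem _ (mem_powerset.mpr (erase_subset _ _))
    have heq : c.erase x = t ∪ Z.erase x := by
      rw [hceq]
      ext y
      simp only [mem_erase, mem_union]
      constructor
      · rintro ⟨hyx, hy | hy⟩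
        · exact Or.inl hy
        · exact Or.inr ⟨hyx, hy⟩
      · rintro (hy | hy)
        · refine ⟨fun hyx => ?_, Or.inl hy⟩
          subst hyx
          have : y ∈ t ∩ Z := mem_inter.mpr ⟨hy, hxZ⟩
          rw [htZ] at this; exact notMem_empty y this
        · exact ⟨hy.1, Or.inr hy.2⟩
    rw [heq]
    exact hBsub hmem
  have hYcube : IsCubeOf C' (cubeAt c Y) :=
    ⟨hcube_sub Y (Subset.refl Y), Y, aux_cubeAt_isCubeS hYc⟩
  -- cubeAt c Y is maximal
  have hmaxcube : IsMaximalCubeOf C' (cubeAt c Y) := by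
    refine ⟨hYcube, fun B' hB' hsubB' => ?_⟩
    have hcB' : c ∈ B' := hsubB' (aux_self_mem_cubeAt hYc)
    obtain ⟨Z, hZY, rfl⟩ := hchar B' hB' hcB'
    have hYZ : Y ⊆ Z := by
      intro x hxY
      have h1 : c \ {x} ∈ cubeAt c Y := by
        rw [aux_mem_cubeAt hYc]
        exact ⟨{x}, singleton_subset_iff.mpr hxY, rfl⟩
      have h2 := hsubB' h1
      rw [aux_mem_cubeAt (hZY.trans hYc)] at h2
      obtain ⟨u, hu, hequ⟩ := h2
      by_contra hxZ
      have hxc : x ∈ c := hYc hxY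
      have hxu : x ∉ u := fun h => hxZ (hu h)
      have : x ∈ c \ u := mem_sdiff.mpr ⟨hxc, hxu⟩
      rw [← hequ] at this
      simp at this
    rw [Subset.antisymm hYZ hZY]
  refine ⟨hc, cubeAt c Y, ⟨hmaxcube, aux_self_mem_cubeAt hYc⟩, ?_⟩
  rintro B ⟨hBmax, hcB⟩
  obtain ⟨Z, hZY, rfl⟩ := hchar B hBmax.1 hcB
  exact hBmax.2 _ hYcube (aux_cubeAt_mono hYc hZY)

lemma sorted_peeling {C : Finset (Finset X)} (hC : IsCondAntimatroid C)
    (l : List (Finset X)) (hnd : l.Nodup) (hl : l.toFinset = C)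
    (hs : List.Pairwise (· ≤ ·) (l.map Finset.card)) : IsCornerPeeling l := by
  obtain ⟨-, hint, -⟩ := hC
  have hpw : ∀ j k (hj : j < l.length) (hk : k < l.length), j ≤ k →
      (l[j]).card ≤ (l[k]).card := by
    have hp : l.Pairwise (fun a b => a.card ≤ b.card) := by
      rw [← List.pairwise_map (f := Finset.card)]; exact hs
    intro j k hj hk hjk
    rcases lt_or_eq_of_le hjk with h | h
    · exact List.pairwise_iff_getElem.mp hp j k hj hk h
    · subst h; exact le_refl _
  refine ⟨hnd, fun i hi => ?_⟩
  simp only [List.get_eq_getElem]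
  have hmemC' : ∀ d, d ∈ (l.take (i + 1)).toFinset ↔
      ∃ j, ∃ (hj : j < l.length), j ≤ i ∧ l[j] = d := by
    intro d
    rw [List.mem_toFinset, List.mem_iff_getElem]
    constructor
    · rintro ⟨j, hj, rfl⟩
      have hj' : j < l.length := lt_of_lt_of_le hj (by simp [List.length_take])
      have hji : j < i + 1 := lt_of_lt_of_le hj (by simp [List.length_take])
      exact ⟨j, hj', Nat.lt_succ_iff.mp hji, List.getElem_take.symm⟩
    · rintro ⟨j, hj, hji, rfl⟩
      have hjlen : j < (l.take (i + 1)).length := by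
        simp [List.length_take]; omega
      exact ⟨j, hjlen, List.getElem_take⟩
  apply corner_of_max (C := C)
  · rw [← hl]
    intro d hd
    rw [List.mem_toFinset] at *
    exact List.take_subset _ _ hd
  · exact hint
  · rw [hmemC']; exact ⟨i, hi, le_refl i, rfl⟩
  · intro d hd
    rw [hmemC'] at hd
    obtain ⟨j, hj, hji, rfl⟩ := hd
    exact hpw j i hj hi hji
  · intro d hd hcard
    rw [← hl, List.mem_toFinset, List.mem_iff_getElem] at hd
    obtain ⟨j, hj, rfl⟩ := hd
    rw [hmemC']
    refine ⟨j, hj, ?_, rfl⟩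
    by_contra hcon
    exact absurd (hpw i j hi hj (le_of_lt (not_le.mp hcon))) (not_le.mpr hcard)


/-- Every conditional antimatroid is dismantlable; in particular any
ordering of its concepts that is nondecreasing with respect to cardinality is a
corner peeling. -/
theorem stmt_8 (C : Finset (Finset X)) (hC : IsCondAntimatroid C) :
    Dismantlable C ∧
    ∀ l : List (Finset X), l.Nodup → l.toFinset = C →
      List.Pairwise (· ≤ ·) (l.map Finset.card) → IsCornerPeeling l := by
  constructor
  · set l : List (Finset X) := C.toList.mergeSort (fun a b => a.card ≤ b.card) with hldef
    have hperm : l.Perm C.toList := List.mergeSort_perm _ _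
    have hfin : l.toFinset = C := by
      have : l.toFinset = C.toList.toFinset := by
        ext a; rw [List.mem_toFinset, List.mem_toFinset, hperm.mem_iff]
      rw [this, Finset.toList_toFinset]
    have hnd : l.Nodup := hperm.nodup_iff.mpr C.nodup_toList
    have hsorted : List.Pairwise (· ≤ ·) (l.map Finset.card) := by
      have h := List.pairwise_mergeSort (le := fun a b : Finset X => decide (a.card ≤ b.card))
        (fun a b c hab hbc => by simp_all; omega)
        (fun a b => by simp [Nat.le_total])
        C.toList
      rw [List.pairwise_map]
      have hl2 : l = C.toList.mergeSort (fun a b => decide (a.card ≤ b.card)) := rfl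
      rw [hl2]
      exact h.imp (by simp_all)
    exact ⟨l, hfin, sorted_peeling hC l hnd hfin hsorted⟩
  · intro l hnd hl hs
    exact sorted_peeling hC l hnd hl hs
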